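/- Let X be any random variable taking values in [d] and let ε ≥ 0. Then the coordinates (Z₁,…,Z_d) of the unary-encoding privatization Z of X with parameter ε form a negatively associated collection of random variables. -/

import Mathlib

open MeasureTheory ProbabilityTheory

noncomputable section

/-- Negative association of a finite collection of real random variables:
for all disjoint index sets covering `[n]` and all coordinatewise non-decreasing functions
`f`, `g` depending only on the respective index sets (whose relevant integrals exist),
`E[f·g] ≤ E[f]·E[g]`. -/
def NegAssoc {Ω : Type*} [MeasurableSpace Ω] (P : Measure Ω) {n : ℕ}
    (X : Fin n → Ω → ℝ) : Prop :=
  ∀ I₁ I₂ : Finset (Fin n), Disjoint I₁ I₂ → I₁ ∪ I₂ = Finset.univ →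
    ∀ f g : (Fin n → ℝ) → ℝ, Monotone f → Monotone g →
      (∀ x y : Fin n → ℝ, (∀ i ∈ I₁, x i = y i) → f x = f y) →
      (∀ x y : Fin n → ℝ, (∀ i ∈ I₂, x i = y i) → g x = g y) →
      Integrable (fun ω => f (fun i => X i ω)) P →
      Integrable (fun ω => g (fun i => X i ω)) P →
      Integrable (fun ω => f (fun i => X i ω) * g (fun i => X i ω)) P →
      ∫ ω, f (fun i => X i ω) * g (fun i => X i ω) ∂P ≤
        (∫ ω, f (fun i => X i ω) ∂P) * ∫ ω, g (fun i => X i ω) ∂P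

/-- The unary-encoding randomization function. -/
def ueR {d : ℕ} (ε : ℝ) (x j : Fin d) (u : ℝ) : ℝ :=
  if u ≤ Real.exp (ε / 2) / (Real.exp (ε / 2) + 1) then (if x = j then 1 else 0)
  else (if x = j then 0 else 1)

/-- The datum together with the auxiliary uniform variables, as one family. -/
def ueFam {Ω : Type*} {d : ℕ} (X : Ω → Fin d) (V : Fin d → Ω → ℝ) :
    (i : Sum Unit (Fin d)) → Ω → Sum.elim (fun _ => Fin d) (fun _ => ℝ) i
  | Sum.inl _ => X
  | Sum.inr j => V j

/-- Measurable space structures for `ueFam`. -/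
def ueFamMS {d : ℕ} :
    (i : Sum Unit (Fin d)) → MeasurableSpace (Sum.elim (fun _ => Fin d) (fun _ => ℝ) i)
  | Sum.inl _ => (inferInstance : MeasurableSpace (Fin d))
  | Sum.inr _ => (inferInstance : MeasurableSpace ℝ)

/-- Auxiliary: real value of a bit. -/
def bitR : Bool → ℝ := fun s => if s then 1 else 0

/-- Auxiliary: the privatized vector as a function of the datum and Bernoulli bits. -/
def zvv {d : ℕ} (x : Fin d) (s : Fin d → Bool) : Fin d → ℝ :=
  fun j => if x = j then bitR (s j) else bitR (! s j)

/-- Auxiliary: the privatized vector when the datum matches no coordinate of interest. -/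
def wvv {d : ℕ} (s : Fin d → Bool) : Fin d → ℝ := fun j => bitR (! s j)

/-- Auxiliary: the privatized vector with coordinate `x` forced to value `r`. -/
def uvv {d : ℕ} (x : Fin d) (r : ℝ) (s : Fin d → Bool) : Fin d → ℝ :=
  fun j => if j = x then r else bitR (! s j)

/-- Auxiliary: the Bernoulli bits extracted from the uniform variables. -/
def ueBits {Ω : Type*} {d : ℕ} (c : ℝ) (V : Fin d → Ω → ℝ) (ω : Ω) : Fin d → Bool :=
  fun j => decide (V j ω ≤ c)

/-- A function of a measurable map into a finite discrete space is integrable. -/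
lemma integrable_comp_discrete {Ω : Type*} [MeasurableSpace Ω] (P : Measure Ω)
    [IsFiniteMeasure P] {α : Type*} [Fintype α] [MeasurableSpace α]
    [MeasurableSingletonClass α]
    {T : Ω → α} (hT : Measurable T) (h : α → ℝ) :
    Integrable (fun ω => h (T ω)) P := by
  classical
  have heq : (fun ω => h (T ω)) = fun ω => ∑ a : α, if T ω = a then h a else 0 := by
    funext ω; simp
  rw [heq]
  refine integrable_finset_sum _ fun a _ => ?_
  have : (fun ω => if T ω = a then h a else 0)
      = Set.indicator (T ⁻¹' {a}) (fun _ => h a) := by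
    funext ω; simp [Set.indicator_apply]
  rw [this]
  exact (integrable_const (h a)).indicator (hT (measurableSet_singleton a))

/-- the coordinates of the unary-encoding privatization of any random datum
in `[d]` are negatively associated. -/
theorem stmt_12 (Ω : Type) (_ : MeasurableSpace Ω) (P : Measure Ω) [IsProbabilityMeasure P]
    (d : ℕ) (ε : ℝ) (hε : 0 ≤ ε)
    (X : Ω → Fin d) (V : Fin d → Ω → ℝ)
    (hmX : Measurable X) (hmV : ∀ j, Measurable (V j))
    (hindep : iIndepFun (m := ueFamMS) (ueFam X V) P)
    (hunif : ∀ j, Measure.map (V j) P = volume.restrict (Set.Icc (0 : ℝ) 1)) :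
    NegAssoc P (fun j ω => ueR ε (X ω) j (V j ω)) := by
  classical
  intro I₁ I₂ hdisj hunion f g hmonf hmong hfI hgI hif hig hifg
  letI : ∀ i : Sum Unit (Fin d), MeasurableSpace (Sum.elim (fun _ => Fin d) (fun _ => ℝ) i) :=
    ueFamMS
  set c : ℝ := Real.exp (ε / 2) / (Real.exp (ε / 2) + 1) with hcdef
  -- basic facts about c
  have hexp1 : (1:ℝ) ≤ Real.exp (ε/2) := by
    rw [← Real.exp_zero]; exact Real.exp_le_exp.mpr (by linarith)
  have hden : (0:ℝ) < Real.exp (ε/2) + 1 := by positivity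
  have hc0 : 0 ≤ c := by rw [hcdef]; positivity
  have hc1 : c ≤ 1 := by rw [hcdef, div_le_one hden]; linarith
  have hchalf : 1/2 ≤ c := by rw [hcdef, le_div_iff₀ hden]; nlinarith
  -- measurability infrastructure
  have famMeas : ∀ i, @Measurable _ _ _ (ueFamMS i) (ueFam X V i) := by
    intro i; cases i with
    | inl u => exact hmX
    | inr j => exact hmV j
  have mdec : Measurable fun u : ℝ => decide (u ≤ c) := by
    have : (fun u : ℝ => decide (u ≤ c)) = fun u => if u ≤ c then true else false := by
      funext u; by_cases h : u ≤ c <;> simp [h]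
    rw [this]
    exact Measurable.ite measurableSet_Iic measurable_const measurable_const
  have hbits : Measurable (fun ω => ueBits c V ω) := by
    refine measurable_pi_lambda _ fun j => ?_
    exact mdec.comp (hmV j)
  have intAll : ∀ h : Fin d × (Fin d → Bool) → ℝ,
      Integrable (fun ω => h (X ω, ueBits c V ω)) P :=
    fun h => integrable_comp_discrete P (hmX.prodMk hbits) h
  -- independence lemma A : any function of X vs any function of the bits
  have lemA : ∀ (h₁ : Fin d → ℝ) (h₂ : (Fin d → Bool) → ℝ),
      IndepFun (fun ω => h₁ (X ω)) (fun ω => h₂ (ueBits c V ω)) P := by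
    intro h₁ h₂
    have base := hindep.indepFun_finset {Sum.inl ()} (Finset.univ.image Sum.inr)
      (by simp) famMeas
    refine base.comp (φ := fun t => h₁ (t ⟨Sum.inl (), by simp⟩))
      (ψ := fun t => h₂ (fun j => decide ((t ⟨Sum.inr j, by simp⟩ : ℝ) ≤ c))) ?_ ?_
    · exact (measurable_of_countable h₁).comp (measurable_pi_apply _)
    · refine (measurable_of_countable h₂).comp (measurable_pi_lambda _ fun j => ?_)
      exact mdec.comp (measurable_pi_apply _)
  -- independence lemma B : functions of bits over disjoint index sets
  have lemB : ∀ (S₁ S₂ : Finset (Fin d)), Disjoint S₁ S₂ →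
      ∀ (h₁ h₂ : (Fin d → Bool) → ℝ),
      (∀ s s', (∀ j ∈ S₁, s j = s' j) → h₁ s = h₁ s') →
      (∀ s s', (∀ j ∈ S₂, s j = s' j) → h₂ s = h₂ s') →
      IndepFun (fun ω => h₁ (ueBits c V ω)) (fun ω => h₂ (ueBits c V ω)) P := by
    intro S₁ S₂ hS h₁ h₂ hd₁ hd₂
    have base := hindep.indepFun_finset (S₁.image Sum.inr) (S₂.image Sum.inr)
      ((Finset.disjoint_image Sum.inr_injective).mpr hS) famMeas
    have comp := base.comp
      (φ := fun t => h₁ (fun j => if hj : j ∈ S₁ then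
        decide ((t ⟨Sum.inr j, Finset.mem_image_of_mem _ hj⟩ : ℝ) ≤ c) else false))
      (ψ := fun t => h₂ (fun j => if hj : j ∈ S₂ then
        decide ((t ⟨Sum.inr j, Finset.mem_image_of_mem _ hj⟩ : ℝ) ≤ c) else false))
      (by
        refine (measurable_of_countable h₁).comp (measurable_pi_lambda _ fun j => ?_)
        by_cases hj : j ∈ S₁
        · simp only [hj, dif_pos]
          exact mdec.comp (measurable_pi_apply _)
        · simp only [hj, dif_neg, not_false_iff]
          exact measurable_const)
      (by
        refine (measurable_of_countable h₂).comp (measurable_pi_lambda _ fun j => ?_)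
        by_cases hj : j ∈ S₂
        · simp only [hj, dif_pos]
          exact mdec.comp (measurable_pi_apply _)
        · simp only [hj, dif_neg, not_false_iff]
          exact measurable_const)
    refine ProbabilityTheory.IndepFun.congr comp (Filter.Eventually.of_forall fun ω => ?_)
      (Filter.Eventually.of_forall fun ω => ?_)
    · exact hd₁ _ _ fun j hj => by simp [hj, ueFam, ueBits]; congr
    · exact hd₂ _ _ fun j hj => by simp [hj, ueFam, ueBits]; congr
  -- pointwise identification of the privatized coordinates
  have hZ : ∀ (ω : Ω) (i : Fin d), ueR ε (X ω) i (V i ω) = zvv (X ω) (ueBits c V ω) i := by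
    intro ω i
    by_cases h1 : V i ω ≤ c <;> by_cases h2 : X ω = i <;>
      simp [ueR, zvv, bitR, ueBits, ← hcdef, h1, h2]
  -- expectation of a single bit
  have Ebit : ∀ x : Fin d, ∫ ω, bitR (ueBits c V ω x) ∂P = c := by
    intro x
    have h1 : (fun ω => bitR (ueBits c V ω x))
        = fun ω => Set.indicator (Set.Iic c) (fun _ => (1:ℝ)) (V x ω) := by
      funext ω; by_cases h : V x ω ≤ c <;> simp [bitR, ueBits, h, Set.indicator_apply]
    rw [h1, ← integral_map (hmV x).aemeasurable
      ((stronglyMeasurable_const.indicator measurableSet_Iic).aestronglyMeasurable),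
      hunif x, integral_indicator measurableSet_Iic, setIntegral_const,
      measureReal_restrict_apply measurableSet_Iic]
    have hseteq : Set.Iic c ∩ Set.Icc 0 1 = Set.Icc 0 c := by
      ext u; simp only [Set.mem_inter_iff, Set.mem_Iic, Set.mem_Icc]
      constructor
      · rintro ⟨h1, h2, h3⟩; exact ⟨h2, h1⟩
      · rintro ⟨h1, h2⟩; exact ⟨h2, h1, le_trans h2 hc1⟩
    rw [hseteq, Real.volume_real_Icc]
    simp [ENNReal.toReal_ofReal, hc0]
  -- abbreviations
  set p : Fin d → ℝ := fun x => ∫ ω, (if X ω = x then (1:ℝ) else 0) ∂P with hpdef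
  set A : Fin d → ℝ := fun x => ∫ ω, f (zvv x (ueBits c V ω)) ∂P with hAdef
  set B : Fin d → ℝ := fun x => ∫ ω, g (zvv x (ueBits c V ω)) ∂P with hBdef
  set A₀ : ℝ := ∫ ω, f (wvv (ueBits c V ω)) ∂P with hA0def
  set B₀ : ℝ := ∫ ω, g (wvv (ueBits c V ω)) ∂P with hB0def
  -- basic facts about p
  have hp0 : ∀ x, 0 ≤ p x := by
    intro x
    exact integral_nonneg fun ω => by dsimp only; split <;> norm_num
  have hp1 : ∑ x : Fin d, p x = 1 := by
    rw [hpdef, ← integral_finset_sum]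
    · have : ∀ ω, (∑ x : Fin d, if X ω = x then (1:ℝ) else 0) = 1 := by
        intro ω; rw [Finset.sum_ite_eq]; simp
      simp only [this]
      simp
    · intro x _
      exact intAll (fun pr => if pr.1 = x then (1:ℝ) else 0)
  -- decomposition of the integrals over the value of X
  have hone : ∀ (ω : Ω) (h : Fin d → ℝ),
      h (X ω) = ∑ x : Fin d, (if X ω = x then (1:ℝ) else 0) * h x := by
    intro ω h
    rw [Finset.sum_congr rfl (fun x _ => by rw [ite_mul, one_mul, zero_mul]),
      Finset.sum_ite_eq]
    simp
  have intF : ∫ ω, f (fun i => ueR ε (X ω) i (V i ω)) ∂P = ∑ x : Fin d, p x * A x := by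
    have e1 : (fun ω => f (fun i => ueR ε (X ω) i (V i ω)))
        = fun ω => ∑ x : Fin d, (if X ω = x then (1:ℝ) else 0) * f (zvv x (ueBits c V ω)) := by
      funext ω
      have h2 : f (fun i => ueR ε (X ω) i (V i ω)) = f (zvv (X ω) (ueBits c V ω)) :=
        congrArg f (funext fun i => hZ ω i)
      rw [h2]; exact hone ω (fun x => f (zvv x (ueBits c V ω)))
    rw [e1, integral_finset_sum _ (fun x _ =>
      intAll (fun pr => (if pr.1 = x then (1:ℝ) else 0) * f (zvv x pr.2)))]
    refine Finset.sum_congr rfl fun x _ => ?_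
    exact ProbabilityTheory.IndepFun.integral_fun_mul_eq_mul_integral (lemA (fun y => if y = x then (1:ℝ) else 0) (fun s => f (zvv x s)))
      (intAll (fun pr => if pr.1 = x then (1:ℝ) else 0)).aestronglyMeasurable
      (intAll (fun pr => f (zvv x pr.2))).aestronglyMeasurable
  have intG : ∫ ω, g (fun i => ueR ε (X ω) i (V i ω)) ∂P = ∑ x : Fin d, p x * B x := by
    have e1 : (fun ω => g (fun i => ueR ε (X ω) i (V i ω)))
        = fun ω => ∑ x : Fin d, (if X ω = x then (1:ℝ) else 0) * g (zvv x (ueBits c V ω)) := by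
      funext ω
      have h2 : g (fun i => ueR ε (X ω) i (V i ω)) = g (zvv (X ω) (ueBits c V ω)) :=
        congrArg g (funext fun i => hZ ω i)
      rw [h2]; exact hone ω (fun x => g (zvv x (ueBits c V ω)))
    rw [e1, integral_finset_sum _ (fun x _ =>
      intAll (fun pr => (if pr.1 = x then (1:ℝ) else 0) * g (zvv x pr.2)))]
    refine Finset.sum_congr rfl fun x _ => ?_
    exact ProbabilityTheory.IndepFun.integral_fun_mul_eq_mul_integral (lemA (fun y => if y = x then (1:ℝ) else 0) (fun s => g (zvv x s)))
      (intAll (fun pr => if pr.1 = x then (1:ℝ) else 0)).aestronglyMeasurable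
      (intAll (fun pr => g (zvv x pr.2))).aestronglyMeasurable
  -- dependence of f ∘ zvv on the bits in I₁ only
  have fdep : ∀ x : Fin d, ∀ s s' : Fin d → Bool, (∀ j ∈ I₁, s j = s' j) →
      f (zvv x s) = f (zvv x s') := by
    intro x s s' h
    exact hfI _ _ fun j hj => by simp [zvv, h j hj]
  have gdep : ∀ x : Fin d, ∀ s s' : Fin d → Bool, (∀ j ∈ I₂, s j = s' j) →
      g (zvv x s) = g (zvv x s') := by
    intro x s s' h
    exact hgI _ _ fun j hj => by simp [zvv, h j hj]
  have intFG : ∫ ω, f (fun i => ueR ε (X ω) i (V i ω)) * g (fun i => ueR ε (X ω) i (V i ω)) ∂P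
      = ∑ x : Fin d, p x * (A x * B x) := by
    have e1 : (fun ω => f (fun i => ueR ε (X ω) i (V i ω)) * g (fun i => ueR ε (X ω) i (V i ω)))
        = fun ω => ∑ x : Fin d, (if X ω = x then (1:ℝ) else 0) *
            (f (zvv x (ueBits c V ω)) * g (zvv x (ueBits c V ω))) := by
      funext ω
      have h2 : f (fun i => ueR ε (X ω) i (V i ω)) = f (zvv (X ω) (ueBits c V ω)) :=
        congrArg f (funext fun i => hZ ω i)
      have h3 : g (fun i => ueR ε (X ω) i (V i ω)) = g (zvv (X ω) (ueBits c V ω)) :=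
        congrArg g (funext fun i => hZ ω i)
      rw [h2, h3]
      exact hone ω (fun x => f (zvv x (ueBits c V ω)) * g (zvv x (ueBits c V ω)))
    rw [e1, integral_finset_sum _ (fun x _ =>
      intAll (fun pr => (if pr.1 = x then (1:ℝ) else 0) * (f (zvv x pr.2) * g (zvv x pr.2))))]
    refine Finset.sum_congr rfl fun x _ => ?_
    have step1 : ∫ ω, (if X ω = x then (1:ℝ) else 0) *
        (f (zvv x (ueBits c V ω)) * g (zvv x (ueBits c V ω))) ∂P
        = p x * ∫ ω, f (zvv x (ueBits c V ω)) * g (zvv x (ueBits c V ω)) ∂P :=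
      ProbabilityTheory.IndepFun.integral_fun_mul_eq_mul_integral (lemA (fun y => if y = x then (1:ℝ) else 0)
        (fun s => f (zvv x s) * g (zvv x s)))
        (intAll (fun pr => if pr.1 = x then (1:ℝ) else 0)).aestronglyMeasurable
        (intAll (fun pr => f (zvv x pr.2) * g (zvv x pr.2))).aestronglyMeasurable
    have step2 : ∫ ω, f (zvv x (ueBits c V ω)) * g (zvv x (ueBits c V ω)) ∂P = A x * B x :=
      ProbabilityTheory.IndepFun.integral_fun_mul_eq_mul_integral (lemB I₁ I₂ hdisj (fun s => f (zvv x s)) (fun s => g (zvv x s))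
        (fdep x) (gdep x))
        (intAll (fun pr => f (zvv x pr.2))).aestronglyMeasurable
        (intAll (fun pr => g (zvv x pr.2))).aestronglyMeasurable
    rw [step1, step2]
  -- A x = A₀ off I₁, B x = B₀ off I₂
  have hAeq : ∀ x : Fin d, x ∉ I₁ → A x = A₀ := by
    intro x hx
    refine integral_congr_ae (Filter.Eventually.of_forall fun ω => ?_)
    refine hfI _ _ fun j hj => ?_
    have : x ≠ j := fun h => hx (h ▸ hj)
    simp [zvv, wvv, this]
  have hBeq : ∀ x : Fin d, x ∉ I₂ → B x = B₀ := by
    intro x hx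
    refine integral_congr_ae (Filter.Eventually.of_forall fun ω => ?_)
    refine hgI _ _ fun j hj => ?_
    have : x ≠ j := fun h => hx (h ▸ hj)
    simp [zvv, wvv, this]
  -- A₀ ≤ A x for all x (same for B)
  have keyineq : ∀ (h : (Fin d → ℝ) → ℝ), Monotone h → ∀ x : Fin d,
      ∫ ω, h (wvv (ueBits c V ω)) ∂P ≤ ∫ ω, h (zvv x (ueBits c V ω)) ∂P := by
    intro h hmon x
    have hid1 : ∀ s : Fin d → Bool, h (zvv x s)
        = h (uvv x 0 s) + bitR (s x) * (h (uvv x 1 s) - h (uvv x 0 s)) := by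
      intro s
      cases hs : s x
      · have : zvv x s = uvv x 0 s := by
          funext j
          by_cases hj : j = x
          · subst hj; simp [zvv, uvv, hs, bitR]
          · have hxj : ¬ x = j := fun h' => hj h'.symm
            simp [zvv, uvv, hj, hxj]
        rw [this]; simp [bitR]
      · have : zvv x s = uvv x 1 s := by
          funext j
          by_cases hj : j = x
          · subst hj; simp [zvv, uvv, hs, bitR]
          · have hxj : ¬ x = j := fun h' => hj h'.symm
            simp [zvv, uvv, hj, hxj]
        rw [this]; simp [bitR]
    have hid2 : ∀ s : Fin d → Bool, h (wvv s)
        = h (uvv x 0 s) + bitR (! s x) * (h (uvv x 1 s) - h (uvv x 0 s)) := by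
      intro s
      cases hs : s x
      · have : wvv s = uvv x 1 s := by
          funext j
          by_cases hj : j = x
          · subst hj; simp [wvv, uvv, hs, bitR]
          · simp [wvv, uvv, hj]
        rw [this]; simp [bitR]
      · have : wvv s = uvv x 0 s := by
          funext j
          by_cases hj : j = x
          · subst hj; simp [wvv, uvv, hs, bitR]
          · simp [wvv, uvv, hj]
        rw [this]; simp [bitR]
    have hDnn : ∀ s : Fin d → Bool, 0 ≤ h (uvv x 1 s) - h (uvv x 0 s) := by
      intro s
      refine sub_nonneg.mpr (hmon fun j => ?_)
      by_cases hj : j = x <;> simp [uvv, hj] <;> norm_num [bitR]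
    -- the two integrals differ by (2c-1) * E[D] ≥ 0
    have hsplit : ∫ ω, h (zvv x (ueBits c V ω)) ∂P - ∫ ω, h (wvv (ueBits c V ω)) ∂P
        = ∫ ω, (bitR (ueBits c V ω x) - bitR (! ueBits c V ω x)) *
            (h (uvv x 1 (ueBits c V ω)) - h (uvv x 0 (ueBits c V ω))) ∂P := by
      have i1 : Integrable (fun ω => h (zvv x (ueBits c V ω))) P :=
        intAll (fun pr => h (zvv x pr.2))
      have i2 : Integrable (fun ω => h (wvv (ueBits c V ω))) P :=
        intAll (fun pr => h (wvv pr.2))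
      rw [← integral_sub i1 i2]
      refine integral_congr_ae (Filter.Eventually.of_forall fun ω => ?_)
      show h (zvv x (ueBits c V ω)) - h (wvv (ueBits c V ω))
        = (bitR (ueBits c V ω x) - bitR (! ueBits c V ω x)) *
            (h (uvv x 1 (ueBits c V ω)) - h (uvv x 0 (ueBits c V ω)))
      rw [hid1 (ueBits c V ω), hid2 (ueBits c V ω)]
      ring
    have hind : ∫ ω, (bitR (ueBits c V ω x) - bitR (! ueBits c V ω x)) *
        (h (uvv x 1 (ueBits c V ω)) - h (uvv x 0 (ueBits c V ω))) ∂P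
        = (∫ ω, (bitR (ueBits c V ω x) - bitR (! ueBits c V ω x)) ∂P) *
          ∫ ω, (h (uvv x 1 (ueBits c V ω)) - h (uvv x 0 (ueBits c V ω))) ∂P := by
      refine ProbabilityTheory.IndepFun.integral_fun_mul_eq_mul_integral (lemB {x} (Finset.univ.erase x) (by simp)
        (fun s => bitR (s x) - bitR (! s x))
        (fun s => h (uvv x 1 s) - h (uvv x 0 s)) ?_ ?_)
        (intAll (fun pr => bitR (pr.2 x) - bitR (! pr.2 x))).aestronglyMeasurable
        (intAll (fun pr => h (uvv x 1 pr.2) - h (uvv x 0 pr.2))).aestronglyMeasurable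
      · intro s s' hss; rw [hss x (by simp)]
      · intro s s' hss
        have e1 : ∀ r, uvv x r s = uvv x r s' := by
          intro r; funext j
          by_cases hj : j = x
          · simp [uvv, hj]
          · simp [uvv, hj, hss j (by simp [hj])]
        rw [e1 0, e1 1]
    have hbeta : ∫ ω, (bitR (ueBits c V ω x) - bitR (! ueBits c V ω x)) ∂P = 2*c - 1 := by
      have e1 : (fun ω => bitR (ueBits c V ω x) - bitR (! ueBits c V ω x))
          = fun ω => 2 * bitR (ueBits c V ω x) - 1 := by
        funext ω; cases h : ueBits c V ω x <;> simp [bitR] <;> ring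
      have i1 : Integrable (fun ω => 2 * bitR (ueBits c V ω x)) P :=
        intAll (fun pr => 2 * bitR (pr.2 x))
      have e2 : ∫ ω, 2 * bitR (ueBits c V ω x) ∂P = 2 * c := by
        have i0 : Integrable (fun ω => bitR (ueBits c V ω x)) P :=
          intAll (fun pr => bitR (pr.2 x))
        rw [show (fun ω => 2 * bitR (ueBits c V ω x)) = fun ω => bitR (ueBits c V ω x) + bitR (ueBits c V ω x) by funext ω; ring,
          integral_add i0 i0, Ebit x]
        ring
      rw [e1, integral_sub i1 (integrable_const 1), e2]
      simp
    have hDint : 0 ≤ ∫ ω, (h (uvv x 1 (ueBits c V ω)) - h (uvv x 0 (ueBits c V ω))) ∂P :=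
      integral_nonneg fun ω => hDnn _
    have := hsplit.trans (hind.trans (by rw [hbeta]))
    nlinarith [mul_nonneg (by linarith : (0:ℝ) ≤ 2*c - 1) hDint]
  have hAge : ∀ x, A₀ ≤ A x := fun x => keyineq f hmonf x
  have hBge : ∀ x, B₀ ≤ B x := fun x => keyineq g hmong x
  -- final algebra
  set Sα : ℝ := ∑ x : Fin d, p x * (A x - A₀) with hSa
  set Sβ : ℝ := ∑ x : Fin d, p x * (B x - B₀) with hSb
  have hSa0 : 0 ≤ Sα :=
    Finset.sum_nonneg fun x _ => mul_nonneg (hp0 x) (by linarith [hAge x])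
  have hSb0 : 0 ≤ Sβ :=
    Finset.sum_nonneg fun x _ => mul_nonneg (hp0 x) (by linarith [hBge x])
  have hzero : ∀ x : Fin d, (A x - A₀) * (B x - B₀) = 0 := by
    intro x
    by_cases hx : x ∈ I₁
    · have : x ∉ I₂ := fun h => (Finset.disjoint_left.mp hdisj hx) h
      rw [hBeq x this]; ring
    · rw [hAeq x hx]; ring
  have eA : ∑ x : Fin d, p x * A x = A₀ + Sα := by
    rw [hSa]
    have : ∀ x : Fin d, p x * A x = p x * A₀ + p x * (A x - A₀) := fun x => by ring
    rw [Finset.sum_congr rfl fun x _ => this x, Finset.sum_add_distrib,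
      ← Finset.sum_mul, hp1, one_mul]
  have eB : ∑ x : Fin d, p x * B x = B₀ + Sβ := by
    rw [hSb]
    have : ∀ x : Fin d, p x * B x = p x * B₀ + p x * (B x - B₀) := fun x => by ring
    rw [Finset.sum_congr rfl fun x _ => this x, Finset.sum_add_distrib,
      ← Finset.sum_mul, hp1, one_mul]
  have eAB : ∑ x : Fin d, p x * (A x * B x) = A₀ * B₀ + A₀ * Sβ + B₀ * Sα := by
    have : ∀ x : Fin d, p x * (A x * B x)
        = p x * (A₀ * B₀) + A₀ * (p x * (B x - B₀)) + B₀ * (p x * (A x - A₀)) := by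
      intro x
      linear_combination p x * hzero x
    rw [Finset.sum_congr rfl fun x _ => this x]
    rw [Finset.sum_add_distrib, Finset.sum_add_distrib, ← Finset.sum_mul,
      ← Finset.mul_sum, ← Finset.mul_sum, hp1, one_mul, ← hSa, ← hSb]
  rw [intFG, intF, intG, eA, eB, eAB]
  nlinarith [mul_nonneg hSa0 hSb0]
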